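/- If for each point x of a topological space X, player ONE does not have a winning strategy in the sequence-selection game at x (where in inning n ONE plays a sequence S_n converging to x and TWO chooses an infinite subset T_n ⊆ S_n, TWO winning if ⋃_n T_n converges to x), then X is α_{2^-}. -/

import Mathlib

open Filter Topology Set

/-- A countably infinite set converging to `x`: `x` is not in the set, and the set is
cofinitely contained in every neighborhood of `x`. -/
def ConvSeq {X : Type*} [TopologicalSpace X] (S : Set X) (x : X) : Prop :=
  S.Countable ∧ S.Infinite ∧ x ∉ S ∧ ∀ U ∈ nhds x, (S \ U).Finite

/-- A set converges to `x` in the weak sense: all but finitely many of its elements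
are in every neighborhood of `x`. -/
def SetConv {X : Type*} [TopologicalSpace X] (S : Set X) (x : X) : Prop :=
  ∀ U ∈ nhds x, (S \ U).Finite
/-- ONE has a winning strategy in the sequence-selection game at `x`: ONE plays
sequences converging to `x`, TWO responds with infinite subsets, and TWO wins if the
union of his choices converges to `x`. -/
def OneHasWinningStrategy {X : Type*} [TopologicalSpace X] (x : X) : Prop :=
  ∃ σ : List (Set X) → Set X,
    (∀ h, ConvSeq (σ h) x) ∧
    ∀ T : ℕ → Set X,
      (∀ n, T n ⊆ σ (List.ofFn fun i : Fin n => T i) ∧ (T n).Infinite) →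
      ¬ ConvSeq (⋃ n, T n) x

namespace Alpha2Aux

variable {X : Type*}

open scoped Classical in
/-- The next set of candidate column indices, given the current set `M`, the inning `n`,
and TWO's response `t`. -/
noncomputable def nextM (a : ℕ → ℕ → X) (x : X) (K : Set X) (M : Set ℕ) (n : ℕ)
    (t : Set X) : Set ℕ :=
  if ((a n '' M) \ {x}).Infinite then {m ∈ M | a n m ∈ t} else {m ∈ M | a n m ∈ K ∪ {x}}

noncomputable def step (a : ℕ → ℕ → X) (x : X) (K : Set X) :
    (Set ℕ × ℕ) → Set X → (Set ℕ × ℕ) :=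
  fun p t => (nextM a x K p.1 p.2 t, p.2 + 1)

noncomputable def bigM (a : ℕ → ℕ → X) (x : X) (K : Set X) (l : List (Set X)) : Set ℕ :=
  (l.foldl (step a x K) (Set.univ, 0)).1

lemma foldl_snd (a : ℕ → ℕ → X) (x : X) (K : Set X) :
    ∀ (l : List (Set X)) (p : Set ℕ × ℕ), (l.foldl (step a x K) p).2 = p.2 + l.length := by
  intro l
  induction l with
  | nil => simp
  | cons t l ih =>
    intro p
    rw [List.foldl_cons, ih]
    simp [step]
    omega

lemma bigM_concat (a : ℕ → ℕ → X) (x : X) (K : Set X) (l : List (Set X)) (t : Set X) :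
    bigM a x K (l ++ [t]) = nextM a x K (bigM a x K l) l.length t := by
  unfold bigM
  rw [List.foldl_append]
  simp only [List.foldl_cons, List.foldl_nil, step]
  rw [foldl_snd]
  simp

open scoped Classical in
/-- ONE's strategy: if the current row restricted to the current candidate columns is
an infinite set (away from `x`), play it; otherwise play a dummy convergent set `C`. -/
noncomputable def strat (a : ℕ → ℕ → X) (x : X) (K : Set X) (C : Set X) :
    List (Set X) → Set X :=
  fun l => if ((a l.length '' bigM a x K l) \ {x}).Infinite
    then (a l.length '' bigM a x K l) \ {x} else C

end Alpha2Aux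

/-- If ONE has no winning strategy in the sequence-selection game at each point,
then the space is α₂⁻. -/
theorem no_winning_strategy_implies_alpha2minus {X : Type*} [TopologicalSpace X]
    (h : ∀ x : X, ¬ OneHasWinningStrategy x) :
    ∀ (x : X) (a : ℕ → ℕ → X), (∀ n, Tendsto (a n) atTop (nhds x)) →
      ∃ m : ℕ → ℕ, StrictMono m ∧
        SetConv {z | ∃ n, ∃ j ≤ n, z = a j (m n)} x := by
  intro x a ha
  classical
  set K : Set X := {y | ∀ U ∈ nhds x, y ∈ U} with hK
  have hKU : ∀ U ∈ nhds x, K ⊆ U := fun U hU y hy => hy U hU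
  -- preimage of a neighborhood is cofinite
  have hpre : ∀ (j : ℕ) (U : Set X), U ∈ nhds x → ((a j) ⁻¹' U)ᶜ.Finite := by
    intro j U hU
    have hev : (a j) ⁻¹' U ∈ atTop := ha j hU
    rwa [← Nat.cofinite_eq_atTop, mem_cofinite] at hev
  -- fibers over points outside K are finite
  have fib : ∀ (j : ℕ) (y : X), y ∉ K → {m | a j m = y}.Finite := by
    intro j y hy
    simp only [hK, mem_setOf_eq, not_forall] at hy
    obtain ⟨U, hU, hyU⟩ := hy
    refine (hpre j U hU).subset ?_
    intro m hm
    simp only [mem_setOf_eq] at hm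
    simp only [mem_compl_iff, mem_preimage, hm]
    exact hyU
  by_cases hC : ∃ C : Set X, ConvSeq C x
  · -- the main case: run the game
    obtain ⟨C, hCconv⟩ := hC
    set σ := Alpha2Aux.strat a x K C with hσ
    have hσgood : ∀ l, ConvSeq (σ l) x := by
      intro l
      rw [hσ, Alpha2Aux.strat]
      split_ifs with hinf
      · refine ⟨((Set.to_countable _).image _).mono diff_subset, hinf, by simp, ?_⟩
        intro U hU
        refine ((hpre l.length U hU).image (a l.length)).subset ?_
        rintro z ⟨⟨⟨m, -, rfl⟩, -⟩, hzU⟩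
        exact ⟨m, hzU, rfl⟩
      · exact hCconv
    have hh := h x
    rw [OneHasWinningStrategy] at hh
    push_neg at hh
    obtain ⟨T, hT, hW⟩ := hh σ hσgood
    set Mseq : ℕ → Set ℕ :=
      fun n => Alpha2Aux.bigM a x K (List.ofFn fun i : Fin n => T i) with hMseq
    have hM0 : Mseq 0 = univ := rfl
    have hofn : ∀ n : ℕ, (List.ofFn fun i : Fin (n+1) => T i)
        = (List.ofFn fun i : Fin n => T i) ++ [T n] := by
      intro n
      rw [List.ofFn_succ']
      simp [List.concat_eq_append]
    have hMsucc : ∀ n, Mseq (n+1) = Alpha2Aux.nextM a x K (Mseq n) n (T n) := by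
      intro n
      rw [hMseq]
      simp only
      rw [hofn n, Alpha2Aux.bigM_concat]
      simp
    have hsub : ∀ n, Mseq (n+1) ⊆ Mseq n := by
      intro n
      rw [hMsucc]
      unfold Alpha2Aux.nextM
      split_ifs <;> exact sep_subset _ _
    have hmem : ∀ n m, m ∈ Mseq (n+1) → a n m ∈ T n ∨ a n m ∈ K ∪ {x} := by
      intro n m
      rw [hMsucc]
      unfold Alpha2Aux.nextM
      split_ifs
      · exact fun hm => Or.inl hm.2
      · exact fun hm => Or.inr hm.2
    have hinf : ∀ n, (Mseq n).Infinite := by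
      intro n
      induction n with
      | zero => rw [hM0]; exact infinite_univ
      | succ n ih =>
        rw [hMsucc]
        unfold Alpha2Aux.nextM
        split_ifs with hbr
        · have hσn : σ (List.ofFn fun i : Fin n => T i) = (a n '' Mseq n) \ {x} := by
            rw [hσ, Alpha2Aux.strat]
            simp only [List.length_ofFn]
            rw [if_pos hbr]
          have hsub2 : T n ⊆ a n '' {m ∈ Mseq n | a n m ∈ T n} := by
            intro z hz
            have hz2 := (hT n).1 hz
            rw [hσn] at hz2
            obtain ⟨⟨m, hmM, rfl⟩, -⟩ := hz2
            exact ⟨m, ⟨hmM, hz⟩, rfl⟩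
          exact Set.Infinite.of_image (a n) (((hT n).2).mono hsub2)
        · have hfinimg : ((a n '' Mseq n) \ {x}).Finite := not_infinite.mp hbr
          have hbadfin : {m | m ∈ Mseq n ∧ a n m ∉ K ∪ {x}}.Finite := by
            have hsb : {m | m ∈ Mseq n ∧ a n m ∉ K ∪ {x}}
                ⊆ ⋃ y ∈ ((a n '' Mseq n) \ {x}) \ K, {m | a n m = y} := by
              rintro m ⟨hmM, hm⟩
              simp only [mem_union, mem_singleton_iff, not_or] at hm
              exact mem_biUnion ⟨⟨⟨m, hmM, rfl⟩, hm.2⟩, hm.1⟩ rfl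
            exact (((hfinimg.diff (t := K)).biUnion fun y hy => fib n y hy.2).subset hsb)
          have heq : {m ∈ Mseq n | a n m ∈ K ∪ {x}}
              = Mseq n \ {m | m ∈ Mseq n ∧ a n m ∉ K ∪ {x}} := by
            ext m
            simp only [mem_sep_iff, mem_diff, mem_setOf_eq, mem_union, mem_singleton_iff]
            tauto
          rw [heq]
          exact ih.diff hbadfin
    have hgt : ∀ (n b : ℕ), ∃ k ∈ Mseq (n+1), b < k :=
      fun n b => (hinf (n+1)).exists_gt b
    choose g hg1 hg2 using hgt
    set msel : ℕ → ℕ := fun n => Nat.rec (g 0 0) (fun k ih => g (k+1) ih) n with hmsel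
    have hmono : StrictMono msel :=
      strictMono_nat_of_lt_succ (fun n => hg2 (n+1) (msel n))
    have hmemM : ∀ n, msel n ∈ Mseq (n+1) := by
      intro n
      cases n with
      | zero => exact hg1 0 0
      | succ k => exact hg1 (k+1) (msel k)
    have hchain : Antitone Mseq := antitone_nat_of_succ_le hsub
    refine ⟨msel, hmono, ?_⟩
    intro U hU
    have hxU := mem_of_mem_nhds hU
    refine (hW.2.2.2 U hU).subset ?_
    rintro z ⟨⟨n, j, hjn, rfl⟩, hzU⟩
    have hmMj : msel n ∈ Mseq (j+1) := hchain (by omega : j+1 ≤ n+1) (hmemM n)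
    rcases hmem j _ hmMj with hTj | hKx
    · exact ⟨mem_iUnion.mpr ⟨j, hTj⟩, hzU⟩
    · rcases hKx with hK' | hx'
      · exact absurd (hKU U hU hK') hzU
      · exact absurd (hx' ▸ hxU) hzU
  · -- degenerate case: no convergent sequence at x at all
    push_neg at hC
    have hrowfin : ∀ j, ((range (a j)) \ {x}).Finite := by
      intro j
      by_contra hinf
      apply hC (range (a j) \ {x})
      refine ⟨(countable_range (a j)).mono diff_subset, hinf, by simp, ?_⟩
      intro U hU
      refine ((hpre j U hU).image (a j)).subset ?_
      rintro z ⟨⟨⟨m, rfl⟩, -⟩, hzU⟩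
      exact ⟨m, hzU, rfl⟩
    have hbad : ∀ j, {m | a j m ∉ K ∪ {x}}.Finite := by
      intro j
      have hsb : {m | a j m ∉ K ∪ {x}}
          ⊆ ⋃ y ∈ ((range (a j)) \ {x}) \ K, {m | a j m = y} := by
        intro m hm
        simp only [mem_setOf_eq, mem_union, mem_singleton_iff, not_or] at hm
        exact mem_biUnion ⟨⟨⟨m, rfl⟩, hm.2⟩, hm.1⟩ rfl
      exact (((hrowfin j).diff (t := K)).biUnion fun y hy => fib j y hy.2).subset hsb
    choose N hN using fun j => (hbad j).bddAbove
    refine ⟨fun n => 1 + n + (Finset.range (n+1)).sup N, ?_, ?_⟩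
    · apply strictMono_nat_of_lt_succ
      intro n
      have hle : (Finset.range (n+1)).sup N ≤ (Finset.range (n+1+1)).sup N :=
        Finset.sup_mono (Finset.range_subset_range.mpr (by omega))
      omega
    · intro U hU
      have hxU := mem_of_mem_nhds hU
      refine Set.finite_empty.subset ?_
      rintro z ⟨⟨n, j, hjn, rfl⟩, hzU⟩
      have hle : N j < 1 + n + (Finset.range (n+1)).sup N := by
        have : N j ≤ (Finset.range (n+1)).sup N :=
          Finset.le_sup (Finset.mem_range.mpr (by omega))
        omega
      have hin : a j (1 + n + (Finset.range (n+1)).sup N) ∈ K ∪ {x} := by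
        by_contra hcon
        exact absurd (hN j hcon) (by omega)
      rcases hin with hK' | hx'
      · exact absurd (hKU U hU hK') hzU
      · exact absurd (hx' ▸ hxU) hzU
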